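/- Let n ≥ 1, let f be (n+1) times continuously differentiable on I = [a,b], and assume that f, f′, …, f^{(n+1)} do not vanish anywhere on I. Let 0 < δ < (b−a)/2 and put J = [a+δ, b−δ]. Then sup_{x ∈ J} |f^{(n)}(x)| ≤ (n/δ)^n · sup_{x ∈ I} |f(x)|. -/

import Mathlib

open Set

lemma sign_const_aux {c d : ℝ} {g : ℝ → ℝ} (hc : ContinuousOn g (Icc c d))
    (h0 : ∀ x ∈ Icc c d, g x ≠ 0) :
    (∀ x ∈ Icc c d, 0 < g x) ∨ (∀ x ∈ Icc c d, g x < 0) := by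
  by_contra hcon
  push_neg at hcon
  obtain ⟨⟨x, hx, hxle⟩, ⟨y, hy, hyle⟩⟩ := hcon
  have hgx' : g x < 0 := lt_of_le_of_ne hxle (h0 x hx)
  have hgy' : 0 < g y := lt_of_le_of_ne hyle (Ne.symm (h0 y hy))
  have hsub : uIcc x y ⊆ Icc c d := uIcc_subset_Icc hx hy
  have h0' : (0:ℝ) ∈ uIcc (g x) (g y) := by
    rw [mem_uIcc]; left; exact ⟨hgx'.le, hgy'.le⟩
  obtain ⟨z, hz, hz0⟩ := intermediate_value_uIcc (hc.mono hsub) h0'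
  exact h0 z (hsub hz) hz0

lemma abs_sub_le_max' {u v : ℝ} (h : (0 < u ∧ 0 < v) ∨ (u < 0 ∧ v < 0)) :
    |u - v| ≤ max |u| |v| := by
  rcases h with ⟨hu, hv⟩ | ⟨hu, hv⟩
  · rw [abs_of_pos hu, abs_of_pos hv, abs_sub_le_iff]
    constructor <;> [exact le_trans (by linarith) (le_max_left u v);
      exact le_trans (by linarith) (le_max_right u v)]
  · rw [abs_of_neg hu, abs_of_neg hv, abs_sub_le_iff]
    constructor <;> [exact le_trans (by linarith) (le_max_right (-u) (-v));
      exact le_trans (by linarith) (le_max_left (-u) (-v))]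

/-- If `f` is `C^{n+1}` on `[a,b]` and `f, f′, …, f^{(n+1)}` do not vanish on `[a,b]`,
then on `J = [a+δ, b−δ]` one has `‖f^{(n)}|_J‖ ≤ (n/δ)^n·‖f‖`. -/
theorem nth_deriv_bound (n : ℕ) (hn : 1 ≤ n) (a b δ : ℝ) (f : ℝ → ℝ)
    (hf : ContDiffOn ℝ (n + 1 : ℕ) f (Icc a b))
    (hf0 : ∀ k ≤ n + 1, ∀ x ∈ Icc a b, iteratedDerivWithin k f (Icc a b) x ≠ 0)
    (hδ0 : 0 < δ) (hδ : δ < (b - a) / 2) :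
    ∀ x ∈ Icc (a + δ) (b - δ),
      |iteratedDerivWithin n f (Icc a b) x| ≤
        ((n : ℝ) / δ) ^ n * sSup ((fun t => |f t|) '' Icc a b) := by
  have hab : a < b := by linarith
  set s := Icc a b with hs
  have hud : UniqueDiffOn ℝ s := uniqueDiffOn_Icc hab
  set g : ℕ → ℝ → ℝ := fun k => iteratedDerivWithin k f s with hg
  set M : ℝ := sSup ((fun t => |f t|) '' s) with hM
  have hMb : ∀ t ∈ s, |f t| ≤ M := by
    intro t ht
    apply le_csSup
    · exact (isCompact_Icc.image_of_continuousOn hf.continuousOn.abs).bddAbove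
    · exact ⟨t, ht, rfl⟩
  have hcont : ∀ k, k ≤ n + 1 → ContinuousOn (g k) s := fun k hk =>
    hf.continuousOn_iteratedDerivWithin (by exact_mod_cast hk) hud
  have hder : ∀ k, k ≤ n → ∀ t ∈ Ioo a b, HasDerivAt (g k) (g (k+1) t) t := by
    intro k hk t ht
    have hts : t ∈ s := Ioo_subset_Icc_self ht
    have hdw : DifferentiableWithinAt ℝ (g k) s t :=
      (hf.differentiableOn_iteratedDerivWithin
        (by exact_mod_cast Nat.lt_succ_of_le hk) hud) t hts
    have h1 : HasDerivWithinAt (g k) (g (k+1) t) s t := by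
      have h2 := hdw.hasDerivWithinAt
      rwa [show g (k+1) t = derivWithin (g k) s t from congrFun iteratedDerivWithin_succ t]
    exact h1.hasDerivAt (Icc_mem_nhds ht.1 ht.2)
  have hsign : ∀ k, k ≤ n + 1 → (∀ x ∈ s, 0 < g k x) ∨ (∀ x ∈ s, g k x < 0) :=
    fun k hk => sign_const_aux (hcont k hk) (hf0 k hk)
  set h : ℝ := δ / n with hh
  have hn0 : (0:ℝ) < n := by exact_mod_cast hn
  have hh0 : 0 < h := div_pos hδ0 hn0
  have key : ∀ k, k ≤ n → ∀ x ∈ Icc (a + k * h) (b - k * h),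
      |g k x| ≤ (1/h)^k * M := by
    intro k
    induction k with
    | zero =>
      intro _ x hx
      simpa [hg] using hMb x (by simpa [hs] using hx)
    | succ k ih =>
      intro hk x hx
      have hk' : k ≤ n := Nat.le_of_succ_le hk
      have hkh : ((k:ℝ)+1) * h = k * h + h := by ring
      have hx1 : a + k * h + h ≤ x := by
        have := hx.1; push_cast at this; linarith
      have hx2 : x ≤ b - k * h - h := by
        have := hx.2; push_cast at this; linarith
      have hkh0 : 0 ≤ (k:ℝ) * h := by positivity
      -- membership facts
      have hmem : ∀ t ∈ Icc (x - h) (x + h), t ∈ Icc (a + k*h) (b - k*h) := by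
        intro t ht; exact ⟨by linarith [ht.1], by linarith [ht.2]⟩
      have hmems : ∀ t ∈ Icc (x - h) (x + h), t ∈ s := by
        intro t ht
        have := hmem t ht; exact ⟨by linarith [this.1], by linarith [this.2]⟩
      have hoo : Ioo (x - h) (x + h) ⊆ Ioo a b := by
        intro t ht; exact ⟨by linarith [ht.1], by linarith [ht.2]⟩
      -- MVT on [x - h, x]
      obtain ⟨ξ, hξ, hξeq⟩ := exists_hasDerivAt_eq_slope (g k) (g (k+1))
        (show x - h < x by linarith)
        ((hcont k (by omega)).mono (fun t ht => hmems t ⟨ht.1, by linarith [ht.2]⟩))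
        (fun t ht => hder k hk' t (hoo ⟨ht.1, by linarith [ht.2]⟩))
      -- MVT on [x, x + h]
      obtain ⟨η, hη, hηeq⟩ := exists_hasDerivAt_eq_slope (g k) (g (k+1))
        (show x < x + h by linarith)
        ((hcont k (by omega)).mono (fun t ht => hmems t ⟨by linarith [ht.1], ht.2⟩))
        (fun t ht => hder k hk' t (hoo ⟨by linarith [ht.1], ht.2⟩))
      -- bound |g (k+1)| at ξ and η
      have hsignk := hsign k (by omega)
      have hbd : ∀ u ∈ Icc (a + k*h) (b - k*h), ∀ v ∈ Icc (a + k*h) (b - k*h),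
          |g k u - g k v| / h ≤ (1/h)^(k+1) * M := by
        intro u hu v hv
        have hus : u ∈ s := ⟨by linarith [hu.1, hkh0], by linarith [hu.2, hkh0]⟩
        have hvs : v ∈ s := ⟨by linarith [hv.1, hkh0], by linarith [hv.2, hkh0]⟩
        have h1 : |g k u - g k v| ≤ max |g k u| |g k v| := by
          apply abs_sub_le_max'
          rcases hsignk with hp | hp
          · exact Or.inl ⟨hp u hus, hp v hvs⟩
          · exact Or.inr ⟨hp u hus, hp v hvs⟩
        have h2 : max |g k u| |g k v| ≤ (1/h)^k * M :=
          max_le (ih hk' u hu) (ih hk' v hv)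
        rw [div_le_iff₀ hh0]
        calc |g k u - g k v| ≤ (1/h)^k * M := h1.trans h2
          _ = (1/h)^(k+1) * M * h := by rw [pow_succ, show (1/h)^k * (1/h) * M * h = (1/h)^k * M * (h * (1/h)) by ring, mul_one_div_cancel hh0.ne', mul_one]
      have hxmem : x ∈ Icc (a + k*h) (b - k*h) := ⟨by linarith, by linarith⟩
      have hξbd : |g (k+1) ξ| ≤ (1/h)^(k+1) * M := by
        rw [hξeq]
        have : x - (x - h) = h := by ring
        rw [this, abs_div, abs_of_pos hh0]
        exact hbd x hxmem (x - h) (hmem _ ⟨le_refl _, by linarith⟩)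
      have hηbd : |g (k+1) η| ≤ (1/h)^(k+1) * M := by
        rw [hηeq]
        have : x + h - x = h := by ring
        rw [this, abs_div, abs_of_pos hh0]
        exact hbd (x + h) (hmem _ ⟨by linarith, le_refl _⟩) x hxmem
      -- monotonicity of g (k+1) on [x-h, x+h] from sign of g (k+2)
      have hcontk1 : ContinuousOn (g (k+1)) (Icc (x-h) (x+h)) :=
        (hcont (k+1) (by omega)).mono hmems
      have hderiv_eq : ∀ t ∈ interior (Icc (x-h) (x+h)), deriv (g (k+1)) t = g (k+2) t := by
        intro t ht
        rw [interior_Icc] at ht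
        exact (hder (k+1) hk t (hoo ht)).deriv
      have hmono : (StrictMonoOn (g (k+1)) (Icc (x-h) (x+h))) ∨
          (StrictAntiOn (g (k+1)) (Icc (x-h) (x+h))) := by
        rcases hsign (k+2) (by omega) with hp | hp
        · left
          apply strictMonoOn_of_deriv_pos (convex_Icc _ _) hcontk1
          intro t ht
          rw [hderiv_eq t ht]
          rw [interior_Icc] at ht
          exact hp t (hmems t (Ioo_subset_Icc_self ht))
        · right
          apply strictAntiOn_of_deriv_neg (convex_Icc _ _) hcontk1
          intro t ht
          rw [hderiv_eq t ht]
          rw [interior_Icc] at ht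
          exact hp t (hmems t (Ioo_subset_Icc_self ht))
      have hξm : ξ ∈ Icc (x-h) (x+h) := ⟨hξ.1.le, by linarith [hξ.2]⟩
      have hηm : η ∈ Icc (x-h) (x+h) := ⟨by linarith [hη.1], hη.2.le⟩
      have hxm : x ∈ Icc (x-h) (x+h) := ⟨by linarith, by linarith⟩
      have hfinal : |g (k+1) x| ≤ max |g (k+1) ξ| |g (k+1) η| := by
        have hmx := le_max_left |g (k+1) ξ| |g (k+1) η|
        have hmy := le_max_right |g (k+1) ξ| |g (k+1) η|
        have hna := neg_abs_le (g (k+1) ξ)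
        have hnb := neg_abs_le (g (k+1) η)
        have hla := le_abs_self (g (k+1) ξ)
        have hlb := le_abs_self (g (k+1) η)
        rcases hmono with hm | hm
        · have h1 : g (k+1) ξ < g (k+1) x := hm hξm hxm hξ.2
          have h2 : g (k+1) x < g (k+1) η := hm hxm hηm hη.1
          rw [abs_le]
          exact ⟨by linarith, by linarith⟩
        · have h1 : g (k+1) x < g (k+1) ξ := hm hξm hxm hξ.2
          have h2 : g (k+1) η < g (k+1) x := hm hxm hηm hη.1
          rw [abs_le]
          exact ⟨by linarith, by linarith⟩
      exact hfinal.trans (max_le hξbd hηbd)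
  intro x hx
  have hnh : (n:ℝ) * h = δ := by rw [hh]; field_simp
  have h1h : (1:ℝ)/h = n/δ := by rw [hh, one_div_div]
  have := key n le_rfl x (by rw [hnh]; exact hx)
  rwa [h1h] at this
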